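/- Lemma: Let P be a rook placement on a rectangular Ferrers board, let a < b be columns, and let L be a longest decreasing sequence in P|_{a,b}, of length k. If column b contains no square of P and L ≠ D_{a,b}(P), then P(L→b)|_{a,b} contains a decreasing sequence of length k+1. If column a contains no square of P and L ≠ d_{a,b}(P), then P(a←L)|_{a,b} contains a decreasing sequence of length k+1. -/

import Mathlib

open scoped Classical

/-- A cell (square) of the grid: `(column, row)`, both `≥ 1` for genuine cells. -/
abbrev Cell : Type := ℕ × ℕ

/-- The rectangle `R(a,b)` consisting of all cells `(i,j)` with `1 ≤ i ≤ a`, `1 ≤ j ≤ b`. -/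
def Rect (a b : ℕ) : Finset Cell := Finset.Icc 1 a ×ˢ Finset.Icc 1 b

/-- A Ferrers board (French notation): a down-left closed finite set of cells with
positive coordinates. -/
def IsFerrers (F : Finset Cell) : Prop :=
  ∀ p ∈ F, 1 ≤ p.1 ∧ 1 ≤ p.2 ∧
    ∀ q : Cell, 1 ≤ q.1 → 1 ≤ q.2 → q.1 ≤ p.1 → q.2 ≤ p.2 → q ∈ F

/-- A rook placement on a board `F`: a subset of `F` with at most one cell in each
column and at most one cell in each row. -/
def IsPlacement (F P : Finset Cell) : Prop :=
  P ⊆ F ∧ (∀ p ∈ P, ∀ q ∈ P, p.1 = q.1 → p = q) ∧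
    (∀ p ∈ P, ∀ q ∈ P, p.2 = q.2 → p = q)

/-- A decreasing sequence in `P`: columns strictly increase, rows strictly decrease. -/
def IsDecSeq (P : Finset Cell) (k : ℕ) (S : Fin k → Cell) : Prop :=
  (∀ i, S i ∈ P) ∧ ∀ i j : Fin k, i < j → (S i).1 < (S j).1 ∧ (S j).2 < (S i).2

/-- An increasing sequence in `P`: columns and rows both strictly increase. -/
def IsIncSeq (P : Finset Cell) (k : ℕ) (S : Fin k → Cell) : Prop :=
  (∀ i, S i ∈ P) ∧ ∀ i j : Fin k, i < j → (S i).1 < (S j).1 ∧ (S i).2 < (S j).2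

/-- Lexicographic comparison of two sequences of cells by their rows (values),
entry by entry from the left. -/
def rowLexLE (k : ℕ) (S T : Fin k → Cell) : Prop :=
  (∀ i, (S i).2 = (T i).2) ∨
    ∃ i : Fin k, (S i).2 < (T i).2 ∧ ∀ j : Fin k, j < i → (S j).2 = (T j).2

/-- The restriction `P|_{a,b}` of a placement to columns `a` through `b`. -/
def colRestrict (a b : ℕ) (P : Finset Cell) : Finset Cell :=
  P.filter fun p => a ≤ p.1 ∧ p.1 ≤ b

/-- The sequence obtained from `S = S₁…S_k` by the left shift towards column `a`:
`S_i` moves to the column of `S_{i-1}` for `i > 1`, and `S₁` moves to column `a`;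
rows are unchanged. -/
def shiftLSeq (a : ℕ) (k : ℕ) (S : Fin k → Cell) : Fin k → Cell := fun i =>
  (if 0 < i.1 then (S ⟨i.1 - 1, Nat.lt_of_le_of_lt (Nat.sub_le _ _) i.isLt⟩).1 else a,
    (S i).2)

/-- The sequence obtained from `S = S₁…S_k` by the right shift towards column `b`:
`S_i` moves to the column of `S_{i+1}` for `i < k`, and `S_k` moves to column `b`;
rows are unchanged. -/
def shiftRSeq (b : ℕ) (k : ℕ) (S : Fin k → Cell) : Fin k → Cell := fun i =>
  (if h : i.1 + 1 < k then (S ⟨i.1 + 1, h⟩).1 else b, (S i).2)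

/-- The left shift `P(a ← S)` of the subplacement `S` of `P` to column `a`. -/
def leftShift (a : ℕ) (k : ℕ) (S : Fin k → Cell) (P : Finset Cell) : Finset Cell :=
  (P \ Finset.image S Finset.univ) ∪ Finset.image (shiftLSeq a k S) Finset.univ

/-- The right shift `P(S → b)` of the subplacement `S` of `P` to column `b`. -/
def rightShift (b : ℕ) (k : ℕ) (S : Fin k → Cell) (P : Finset Cell) : Finset Cell :=
  (P \ Finset.image S Finset.univ) ∪ Finset.image (shiftRSeq b k S) Finset.univ

/-- `S` is a longest decreasing sequence in `P|_{a,b}`. -/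
def IsMaxDec (a b : ℕ) (P : Finset Cell) (k : ℕ) (S : Fin k → Cell) : Prop :=
  IsDecSeq (colRestrict a b P) k S ∧
    ∀ (l : ℕ) (T : Fin l → Cell), IsDecSeq (colRestrict a b P) l T → l ≤ k

/-- `S = d_{a,b}(P)`: the lexicographically value-smallest longest decreasing sequence
in `P|_{a,b}`. -/
def IsSmallestDec (a b : ℕ) (P : Finset Cell) (k : ℕ) (S : Fin k → Cell) : Prop :=
  IsMaxDec a b P k S ∧
    ∀ T : Fin k → Cell, IsDecSeq (colRestrict a b P) k T → rowLexLE k S T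

/-- `S = D_{a,b}(P)`: the lexicographically value-largest longest decreasing sequence
in `P|_{a,b}`. -/
def IsLargestDec (a b : ℕ) (P : Finset Cell) (k : ℕ) (S : Fin k → Cell) : Prop :=
  IsMaxDec a b P k S ∧
    ∀ T : Fin k → Cell, IsDecSeq (colRestrict a b P) k T → rowLexLE k T S

/-- `S` is a longest increasing sequence in `P|_{a,b}`. -/
def IsMaxInc (a b : ℕ) (P : Finset Cell) (k : ℕ) (S : Fin k → Cell) : Prop :=
  IsIncSeq (colRestrict a b P) k S ∧
    ∀ (l : ℕ) (T : Fin l → Cell), IsIncSeq (colRestrict a b P) l T → l ≤ k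

/-- `S = i_{a,b}(P)`: the lexicographically value-smallest longest increasing sequence
in `P|_{a,b}`. -/
def IsSmallestInc (a b : ℕ) (P : Finset Cell) (k : ℕ) (S : Fin k → Cell) : Prop :=
  IsMaxInc a b P k S ∧
    ∀ T : Fin k → Cell, IsIncSeq (colRestrict a b P) k T → rowLexLE k S T

/-- `S = I_{a,b}(P)`: the lexicographically value-largest longest increasing sequence
in `P|_{a,b}`. -/
def IsLargestInc (a b : ℕ) (P : Finset Cell) (k : ℕ) (S : Fin k → Cell) : Prop :=
  IsMaxInc a b P k S ∧
    ∀ T : Fin k → Cell, IsIncSeq (colRestrict a b P) k T → rowLexLE k T S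

private lemma decseq_of_adj {S : Finset Cell} {nn : ℕ} {X : Fin nn → Cell}
    (hmem : ∀ i, X i ∈ S)
    (hadj : ∀ (e : ℕ) (he : e + 1 < nn),
      (X ⟨e, Nat.lt_of_succ_lt he⟩).1 < (X ⟨e + 1, he⟩).1 ∧
      (X ⟨e + 1, he⟩).2 < (X ⟨e, Nat.lt_of_succ_lt he⟩).2) :
    IsDecSeq S nn X := by
  refine ⟨hmem, ?_⟩
  have key : ∀ (j : ℕ) (hj : j < nn) (i : ℕ) (hi : i < nn), i < j →
      (X ⟨i, hi⟩).1 < (X ⟨j, hj⟩).1 ∧ (X ⟨j, hj⟩).2 < (X ⟨i, hi⟩).2 := by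
    intro j
    induction j with
    | zero => intro hj i hi h; omega
    | succ j ih =>
      intro hj i hi h
      rcases Nat.lt_succ_iff_lt_or_eq.mp h with h' | h'
      · obtain ⟨a1, a2⟩ := ih (by omega) i hi h'
        obtain ⟨b1, b2⟩ := hadj j hj
        exact ⟨a1.trans b1, b2.trans a2⟩
      · subst h'; exact hadj i hj
  intro i j hij
  exact key j.1 j.2 i.1 i.2 hij

private lemma shiftR_main {m n : ℕ} {P : Finset Cell} (hP : IsPlacement (Rect m n) P)
    {a b : ℕ} (hab : a < b)
    {k : ℕ} {L : Fin k → Cell} (hL : IsMaxDec a b P k L)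
    (hbE : ∀ p ∈ P, p.1 ≠ b)
    (i₀ : Fin k) (T : Fin k → Cell)
    (hTdec : IsDecSeq (colRestrict a b P) k T)
    (hpre : ∀ j : Fin k, j < i₀ → T j = L j)
    (hrow0 : (L i₀).2 < (T i₀).2) :
    ∃ E : Fin (k + 1) → Cell,
      IsDecSeq (colRestrict a b (rightShift b k L P)) (k + 1) E := by
  by_contra hE
  obtain ⟨i, hik⟩ := i₀
  have hLdec : IsDecSeq (colRestrict a b P) k L := hL.1
  have hmax := hL.2
  have hLQ : ∀ r, L r ∈ colRestrict a b P := hLdec.1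
  have hLmono := hLdec.2
  have hTQ : ∀ r, T r ∈ colRestrict a b P := hTdec.1
  have hTmono := hTdec.2
  have hQP : ∀ p : Cell, p ∈ colRestrict a b P → p ∈ P :=
    fun p hp => (Finset.mem_filter.mp hp).1
  have hQa : ∀ p : Cell, p ∈ colRestrict a b P → a ≤ p.1 :=
    fun p hp => (Finset.mem_filter.mp hp).2.1
  have hQb : ∀ p : Cell, p ∈ colRestrict a b P → p.1 ≤ b :=
    fun p hp => (Finset.mem_filter.mp hp).2.2
  have colinj : ∀ p q : Cell, p ∈ colRestrict a b P → q ∈ colRestrict a b P →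
      p.1 = q.1 → p = q :=
    fun p q hp hq h => hP.2.1 p (hQP p hp) q (hQP q hq) h
  have rowinj : ∀ p q : Cell, p ∈ colRestrict a b P → q ∈ colRestrict a b P →
      p.2 = q.2 → p = q :=
    fun p q hp hq h => hP.2.2 p (hQP p hp) q (hQP q hq) h
  have TltT : ∀ (r s : ℕ) (hr : r < k) (hs : s < k), r < s →
      (T ⟨r, hr⟩).1 < (T ⟨s, hs⟩).1 ∧ (T ⟨s, hs⟩).2 < (T ⟨r, hr⟩).2 :=
    fun r s hr hs h => hTmono ⟨r, hr⟩ ⟨s, hs⟩ h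
  have LltL : ∀ (r s : ℕ) (hr : r < k) (hs : s < k), r < s →
      (L ⟨r, hr⟩).1 < (L ⟨s, hs⟩).1 ∧ (L ⟨s, hs⟩).2 < (L ⟨r, hr⟩).2 :=
    fun r s hr hs h => hLmono ⟨r, hr⟩ ⟨s, hs⟩ h
  have hpreN : ∀ (j : ℕ) (hj : j < k), j < i → T ⟨j, hj⟩ = L ⟨j, hj⟩ :=
    fun j hj h => hpre ⟨j, hj⟩ h
  -- glue contradiction in Q
  have qglue : ∀ (A B : Fin k → Cell), IsDecSeq (colRestrict a b P) k A →
      IsDecSeq (colRestrict a b P) k B →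
      ∀ s : Fin k, (A s).1 < (B s).1 → (B s).2 < (A s).2 → False := by
    intro A B hA hB s hcol hrow2
    have hs := s.2
    have hAlt : ∀ (r t : ℕ) (hr : r < k) (ht : t < k), r < t →
        (A ⟨r, hr⟩).1 < (A ⟨t, ht⟩).1 ∧ (A ⟨t, ht⟩).2 < (A ⟨r, hr⟩).2 :=
      fun r t hr ht h => hA.2 _ _ h
    have hBlt : ∀ (r t : ℕ) (hr : r < k) (ht : t < k), r < t →
        (B ⟨r, hr⟩).1 < (B ⟨t, ht⟩).1 ∧ (B ⟨t, ht⟩).2 < (B ⟨r, hr⟩).2 :=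
      fun r t hr ht h => hB.2 _ _ h
    have hdec : IsDecSeq (colRestrict a b P) (k + 1) (fun e =>
        if h : e.1 ≤ s.1 then A ⟨e.1, by omega⟩ else B ⟨e.1 - 1, by
          have := e.2; omega⟩) := by
      apply decseq_of_adj
      · intro e
        by_cases h : e.1 ≤ s.1
        · rw [dif_pos h]; exact hA.1 _
        · rw [dif_neg h]; exact hB.1 _
      · intro e he
        dsimp only
        by_cases h1 : e + 1 ≤ s.1
        · rw [dif_pos (by omega : e ≤ s.1), dif_pos h1]
          exact hAlt e (e + 1) (by omega) (by omega) (by omega)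
        · by_cases h2 : e ≤ s.1
          · rw [dif_pos h2, dif_neg h1]
            have hes : e = s.1 := by omega
            subst hes
            exact ⟨hcol, hrow2⟩
          · rw [dif_neg h2, dif_neg h1]
            exact hBlt (e - 1) (e + 1 - 1) (by omega) (by omega) (by omega)
    have := hmax (k + 1) _ hdec
    omega
  -- base facts at index i
  have hA0 : (L ⟨i, hik⟩).1 < (T ⟨i, hik⟩).1 := by
    rcases lt_trichotomy ((T ⟨i, hik⟩).1) ((L ⟨i, hik⟩).1) with h | h | h
    · exact absurd (qglue T L hTdec hLdec ⟨i, hik⟩ h hrow0) id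
    · have heq := colinj _ _ (hTQ ⟨i, hik⟩) (hLQ ⟨i, hik⟩) h
      have h2' := congrArg Prod.snd heq
      omega
    · exact h
  have hC0 : ∀ j : Fin k, T ⟨i, hik⟩ ≠ L j := by
    intro j hEq
    rcases lt_trichotomy j.1 i with h | h | h
    · have hTL : T j = L j := hpre j h
      have h1' := (hTmono j ⟨i, hik⟩ h).1
      have h2' : (T ⟨i, hik⟩).1 = (T j).1 := by rw [hEq, ← hTL]
      omega
    · have hj : j = ⟨i, hik⟩ := Fin.ext h
      rw [hj] at hEq
      have h2' := congrArg Prod.snd hEq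
      omega
    · have h1' := (hLmono ⟨i, hik⟩ j h).2
      have h2' := congrArg Prod.snd hEq
      omega
  -- memberships in shifted board
  have hL'Q : ∀ r : Fin k, shiftRSeq b k L r ∈ colRestrict a b (rightShift b k L P) := by
    intro r
    refine Finset.mem_filter.mpr ⟨Finset.mem_union_right _
      (Finset.mem_image.mpr ⟨r, Finset.mem_univ r, rfl⟩), ?_, ?_⟩
    · show a ≤ (if h : r.1 + 1 < k then (L ⟨r.1 + 1, h⟩).1 else b)
      by_cases h : r.1 + 1 < k
      · rw [dif_pos h]; exact hQa _ (hLQ _)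
      · rw [dif_neg h]; exact le_of_lt hab
    · show (if h : r.1 + 1 < k then (L ⟨r.1 + 1, h⟩).1 else b) ≤ b
      by_cases h : r.1 + 1 < k
      · rw [dif_pos h]; exact hQb _ (hLQ _)
      · rw [dif_neg h]
  have hT'Q : ∀ r : Fin k, (∀ j : Fin k, T r ≠ L j) →
      T r ∈ colRestrict a b (rightShift b k L P) := by
    intro r hne
    refine Finset.mem_filter.mpr ⟨Finset.mem_union_left _
      (Finset.mem_sdiff.mpr ⟨hQP _ (hTQ r), ?_⟩), hQa _ (hTQ r), hQb _ (hTQ r)⟩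
    intro hmem
    obtain ⟨j, -, hj⟩ := Finset.mem_image.mp hmem
    exact hne j hj.symm
  -- adjacency of shifted L
  have hL'adjN : ∀ (r t : ℕ) (hr : r < k) (ht : t < k), t = r + 1 →
      (shiftRSeq b k L ⟨r, hr⟩).1 < (shiftRSeq b k L ⟨t, ht⟩).1 ∧
      (shiftRSeq b k L ⟨t, ht⟩).2 < (shiftRSeq b k L ⟨r, hr⟩).2 := by
    intro r t hr ht h
    subst h
    constructor
    · show (if h : r + 1 < k then (L ⟨r + 1, h⟩).1 else b) <
        (if h : r + 1 + 1 < k then (L ⟨r + 1 + 1, h⟩).1 else b)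
      rw [dif_pos ht]
      by_cases h2 : r + 1 + 1 < k
      · rw [dif_pos h2]; exact (LltL (r + 1) (r + 1 + 1) ht h2 (by omega)).1
      · rw [dif_neg h2]
        exact lt_of_le_of_ne (hQb _ (hLQ ⟨r + 1, ht⟩)) (hbE _ (hQP _ (hLQ ⟨r + 1, ht⟩)))
    · show (L ⟨r + 1, ht⟩).2 < (L ⟨r, hr⟩).2
      exact (LltL r (r + 1) hr ht (by omega)).2
  -- junction into T from shifted L
  have hjuncIn : ∀ (e : ℕ) (he : e < k) (he1 : e + 1 < k), e + 1 = i →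
      (shiftRSeq b k L ⟨e, he⟩).1 < (T ⟨e + 1, he1⟩).1 ∧
      (T ⟨e + 1, he1⟩).2 < (shiftRSeq b k L ⟨e, he⟩).2 := by
    intro e he he1 hei
    have hTL := hpreN e he (by omega)
    constructor
    · show (if h : e + 1 < k then (L ⟨e + 1, h⟩).1 else b) < (T ⟨e + 1, he1⟩).1
      rw [dif_pos he1]
      subst hei
      exact hA0
    · show (T ⟨e + 1, he1⟩).2 < (L ⟨e, he⟩).2
      rw [← hTL]
      exact (TltT e (e + 1) he he1 (by omega)).2
  -- main construction of a (k+1)-sequence in the shifted board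
  have fireR : ∀ (w : ℕ) (hw : w < k), i ≤ w →
      (T ⟨w, hw⟩).1 < (if h : w + 1 < k then (L ⟨w + 1, h⟩).1 else b) →
      (L ⟨w, hw⟩).2 < (T ⟨w, hw⟩).2 →
      (∀ (r : ℕ) (hr : r < k), i ≤ r → r ≤ w → ∀ j : Fin k, T ⟨r, hr⟩ ≠ L j) →
      False := by
    intro w hw hiw hocol horow hnin
    apply hE
    refine ⟨fun e => if h1 : e.1 < i then shiftRSeq b k L ⟨e.1, by omega⟩
      else if h2 : e.1 ≤ w then T ⟨e.1, by omega⟩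
      else shiftRSeq b k L ⟨e.1 - 1, by have := e.2; omega⟩, ?_⟩
    apply decseq_of_adj
    · intro e
      by_cases h1 : e.1 < i
      · rw [dif_pos h1]; exact hL'Q _
      · rw [dif_neg h1]
        by_cases h2 : e.1 ≤ w
        · rw [dif_pos h2]; exact hT'Q _ (hnin e.1 (by omega) (by omega) h2)
        · rw [dif_neg h2]; exact hL'Q _
    · intro e he
      dsimp only
      by_cases h1 : e + 1 < i
      · rw [dif_pos (by omega : e < i), dif_pos h1]
        exact hL'adjN e (e + 1) (by omega) (by omega) rfl
      · by_cases h2 : e < i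
        · rw [dif_pos h2, dif_neg h1, dif_pos (by omega : e + 1 ≤ w)]
          exact hjuncIn e (by omega) (by omega) (by omega)
        · by_cases h3 : e + 1 ≤ w
          · rw [dif_neg h2, dif_neg h1, dif_pos h3, dif_pos (by omega : e ≤ w)]
            exact TltT e (e + 1) (by omega) (by omega) (by omega)
          · by_cases h4 : e ≤ w
            · rw [dif_neg h2, dif_pos h4, dif_neg h1, dif_neg h3]
              have hew : e = w := by omega
              subst hew
              exact ⟨hocol, horow⟩
            · rw [dif_neg h2, dif_neg h4, dif_neg h1, dif_neg h3]
              exact hL'adjN (e - 1) (e + 1 - 1) (by omega) (by omega) (by omega)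
  have hD0 : ∀ hr1 : i + 1 < k, (L ⟨i + 1, hr1⟩).1 < (T ⟨i, hik⟩).1 := by
    intro hr1
    rcases lt_trichotomy ((T ⟨i, hik⟩).1) ((L ⟨i + 1, hr1⟩).1) with h | h | h
    · exact absurd (fireR i hik le_rfl (by rw [dif_pos hr1]; exact h) hrow0
        (fun r hr ha hb j => by
          have hri : r = i := by omega
          subst hri
          exact hC0 j)) id
    · exact absurd (colinj _ _ (hTQ ⟨i, hik⟩) (hLQ ⟨i + 1, hr1⟩) h) (hC0 ⟨i + 1, hr1⟩)
    · exact h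
  have main : ∀ (t r : ℕ), i ≤ r → r ≤ t → ∀ hr : r < k,
      ((L ⟨r, hr⟩).1 < (T ⟨r, hr⟩).1) ∧ ((L ⟨r, hr⟩).2 < (T ⟨r, hr⟩).2) ∧
        (∀ j : Fin k, T ⟨r, hr⟩ ≠ L j) ∧
        (∀ hr1 : r + 1 < k, (L ⟨r + 1, hr1⟩).1 < (T ⟨r, hr⟩).1) := by
    intro t
    induction t with
    | zero =>
      intro r h1 h2 hr
      have hri : r = i := by omega
      subst hri
      exact ⟨hA0, hrow0, hC0, hD0⟩
    | succ t ih =>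
      intro r h1 h2 hr
      rcases Nat.lt_or_ge r (t + 1) with hx | hx
      · exact ih r h1 (by omega) hr
      · have hrt : r = t + 1 := by omega
        subst hrt
        rcases Nat.lt_or_ge i (t + 1) with hit | hit
        · have ht : t < k := by omega
          obtain ⟨pA, pB, pC, pD⟩ := ih t (by omega) le_rfl ht
          have hcol : (L ⟨t + 1, hr⟩).1 < (T ⟨t + 1, hr⟩).1 :=
            lt_trans (pD hr) (TltT t (t + 1) ht hr (by omega)).1
          have hB : (L ⟨t + 1, hr⟩).2 < (T ⟨t + 1, hr⟩).2 := by
            rcases lt_trichotomy ((T ⟨t + 1, hr⟩).2) ((L ⟨t + 1, hr⟩).2) with h | h | h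
            · exact absurd (qglue L T hLdec hTdec ⟨t + 1, hr⟩ hcol h) id
            · have heq := rowinj _ _ (hTQ ⟨t + 1, hr⟩) (hLQ ⟨t + 1, hr⟩) h
              have h2' := congrArg Prod.fst heq
              omega
            · exact h
          have hC : ∀ j : Fin k, T ⟨t + 1, hr⟩ ≠ L j := by
            intro j hEq
            rcases lt_trichotomy j.1 (t + 1) with h | h | h
            · have h1' := (hLmono j ⟨t + 1, hr⟩ h).1
              have h2' := congrArg Prod.fst hEq
              omega
            · have hj : j = ⟨t + 1, hr⟩ := Fin.ext h
              rw [hj] at hEq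
              have h2' := congrArg Prod.snd hEq
              omega
            · have h1' := (hLmono ⟨t + 1, hr⟩ j h).2
              have h2' := congrArg Prod.snd hEq
              omega
          refine ⟨hcol, hB, hC, ?_⟩
          intro hr1
          rcases lt_trichotomy ((T ⟨t + 1, hr⟩).1) ((L ⟨t + 2, hr1⟩).1) with h | h | h
          · exact absurd (fireR (t + 1) hr (by omega) (by rw [dif_pos hr1]; exact h) hB
              (fun r' hr' ha hb j => by
                rcases Nat.lt_or_ge r' (t + 1) with hy | hy
                · exact (ih r' ha (by omega) hr').2.2.1 j
                · have hr'' : r' = t + 1 := by omega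
                  subst hr''
                  exact hC j)) id
          · exact absurd (colinj _ _ (hTQ ⟨t + 1, hr⟩) (hLQ ⟨t + 2, hr1⟩) h) (hC ⟨t + 2, hr1⟩)
          · exact h
        · have hti : i = t + 1 := by omega
          subst hti
          exact ⟨hA0, hrow0, hC0, hD0⟩
  have hk0 : 0 < k := by omega
  have hlast := main (k - 1) (k - 1) (by omega) le_rfl (by omega)
  exact fireR (k - 1) (by omega) (by omega)
    (by rw [dif_neg (by omega : ¬(k - 1 + 1 < k))]
        exact lt_of_le_of_ne (hQb _ (hTQ _)) (hbE _ (hQP _ (hTQ _))))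
    hlast.2.1
    (fun r hr ha hb j => (main r r ha le_rfl hr).2.2.1 j)

private lemma shiftL_main {m n : ℕ} {P : Finset Cell} (hP : IsPlacement (Rect m n) P)
    {a b : ℕ} (hab : a < b)
    {k : ℕ} {L : Fin k → Cell} (hL : IsMaxDec a b P k L)
    (haE : ∀ p ∈ P, p.1 ≠ a)
    (i₀ : Fin k) (T : Fin k → Cell)
    (hTdec : IsDecSeq (colRestrict a b P) k T)
    (hpre : ∀ j : Fin k, j < i₀ → T j = L j)
    (hrow0 : (T i₀).2 < (L i₀).2) :
    ∃ E : Fin (k + 1) → Cell,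
      IsDecSeq (colRestrict a b (leftShift a k L P)) (k + 1) E := by
  by_contra hE
  obtain ⟨i, hik⟩ := i₀
  have hLdec : IsDecSeq (colRestrict a b P) k L := hL.1
  have hmax := hL.2
  have hLQ : ∀ r, L r ∈ colRestrict a b P := hLdec.1
  have hLmono := hLdec.2
  have hTQ : ∀ r, T r ∈ colRestrict a b P := hTdec.1
  have hTmono := hTdec.2
  have hQP : ∀ p : Cell, p ∈ colRestrict a b P → p ∈ P :=
    fun p hp => (Finset.mem_filter.mp hp).1
  have hQa : ∀ p : Cell, p ∈ colRestrict a b P → a ≤ p.1 :=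
    fun p hp => (Finset.mem_filter.mp hp).2.1
  have hQb : ∀ p : Cell, p ∈ colRestrict a b P → p.1 ≤ b :=
    fun p hp => (Finset.mem_filter.mp hp).2.2
  have colinj : ∀ p q : Cell, p ∈ colRestrict a b P → q ∈ colRestrict a b P →
      p.1 = q.1 → p = q :=
    fun p q hp hq h => hP.2.1 p (hQP p hp) q (hQP q hq) h
  have rowinj : ∀ p q : Cell, p ∈ colRestrict a b P → q ∈ colRestrict a b P →
      p.2 = q.2 → p = q :=
    fun p q hp hq h => hP.2.2 p (hQP p hp) q (hQP q hq) h
  have TltT : ∀ (r s : ℕ) (hr : r < k) (hs : s < k), r < s →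
      (T ⟨r, hr⟩).1 < (T ⟨s, hs⟩).1 ∧ (T ⟨s, hs⟩).2 < (T ⟨r, hr⟩).2 :=
    fun r s hr hs h => hTmono ⟨r, hr⟩ ⟨s, hs⟩ h
  have LltL : ∀ (r s : ℕ) (hr : r < k) (hs : s < k), r < s →
      (L ⟨r, hr⟩).1 < (L ⟨s, hs⟩).1 ∧ (L ⟨s, hs⟩).2 < (L ⟨r, hr⟩).2 :=
    fun r s hr hs h => hLmono ⟨r, hr⟩ ⟨s, hs⟩ h
  have hpreN : ∀ (j : ℕ) (hj : j < k), j < i → T ⟨j, hj⟩ = L ⟨j, hj⟩ :=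
    fun j hj h => hpre ⟨j, hj⟩ h
  have qglue : ∀ (A B : Fin k → Cell), IsDecSeq (colRestrict a b P) k A →
      IsDecSeq (colRestrict a b P) k B →
      ∀ s : Fin k, (A s).1 < (B s).1 → (B s).2 < (A s).2 → False := by
    intro A B hA hB s hcol hrow2
    have hs := s.2
    have hAlt : ∀ (r t : ℕ) (hr : r < k) (ht : t < k), r < t →
        (A ⟨r, hr⟩).1 < (A ⟨t, ht⟩).1 ∧ (A ⟨t, ht⟩).2 < (A ⟨r, hr⟩).2 :=
      fun r t hr ht h => hA.2 _ _ h
    have hBlt : ∀ (r t : ℕ) (hr : r < k) (ht : t < k), r < t →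
        (B ⟨r, hr⟩).1 < (B ⟨t, ht⟩).1 ∧ (B ⟨t, ht⟩).2 < (B ⟨r, hr⟩).2 :=
      fun r t hr ht h => hB.2 _ _ h
    have hdec : IsDecSeq (colRestrict a b P) (k + 1) (fun e =>
        if h : e.1 ≤ s.1 then A ⟨e.1, by omega⟩ else B ⟨e.1 - 1, by
          have := e.2; omega⟩) := by
      apply decseq_of_adj
      · intro e
        by_cases h : e.1 ≤ s.1
        · rw [dif_pos h]; exact hA.1 _
        · rw [dif_neg h]; exact hB.1 _
      · intro e he
        dsimp only
        by_cases h1 : e + 1 ≤ s.1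
        · rw [dif_pos (by omega : e ≤ s.1), dif_pos h1]
          exact hAlt e (e + 1) (by omega) (by omega) (by omega)
        · by_cases h2 : e ≤ s.1
          · rw [dif_pos h2, dif_neg h1]
            have hes : e = s.1 := by omega
            subst hes
            exact ⟨hcol, hrow2⟩
          · rw [dif_neg h2, dif_neg h1]
            exact hBlt (e - 1) (e + 1 - 1) (by omega) (by omega) (by omega)
    have := hmax (k + 1) _ hdec
    omega
  -- base facts at index i
  have hA0 : (T ⟨i, hik⟩).1 < (L ⟨i, hik⟩).1 := by
    rcases lt_trichotomy ((T ⟨i, hik⟩).1) ((L ⟨i, hik⟩).1) with h | h | h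
    · exact h
    · have heq := colinj _ _ (hTQ ⟨i, hik⟩) (hLQ ⟨i, hik⟩) h
      have h2' := congrArg Prod.snd heq
      omega
    · exact absurd (qglue L T hLdec hTdec ⟨i, hik⟩ h hrow0) id
  have hC0 : ∀ j : Fin k, T ⟨i, hik⟩ ≠ L j := by
    intro j hEq
    rcases lt_trichotomy j.1 i with h | h | h
    · have hTL : T j = L j := hpre j h
      have h1' := (hTmono j ⟨i, hik⟩ h).1
      have h2' : (T ⟨i, hik⟩).1 = (T j).1 := by rw [hEq, ← hTL]
      omega
    · have hj : j = ⟨i, hik⟩ := Fin.ext h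
      rw [hj] at hEq
      have h2' := congrArg Prod.snd hEq
      omega
    · have h1' := (hLmono ⟨i, hik⟩ j h).1
      have h2' := congrArg Prod.fst hEq
      omega
  -- memberships in shifted board
  have hL''Q : ∀ r : Fin k, shiftLSeq a k L r ∈ colRestrict a b (leftShift a k L P) := by
    intro r
    refine Finset.mem_filter.mpr ⟨Finset.mem_union_right _
      (Finset.mem_image.mpr ⟨r, Finset.mem_univ r, rfl⟩), ?_, ?_⟩
    · show a ≤ (if 0 < r.1 then
        (L ⟨r.1 - 1, Nat.lt_of_le_of_lt (Nat.sub_le _ _) r.isLt⟩).1 else a)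
      by_cases h : 0 < r.1
      · rw [if_pos h]; exact hQa _ (hLQ _)
      · rw [if_neg h]
    · show (if 0 < r.1 then
        (L ⟨r.1 - 1, Nat.lt_of_le_of_lt (Nat.sub_le _ _) r.isLt⟩).1 else a) ≤ b
      by_cases h : 0 < r.1
      · rw [if_pos h]; exact hQb _ (hLQ _)
      · rw [if_neg h]; exact le_of_lt hab
  have hT''Q : ∀ r : Fin k, (∀ j : Fin k, T r ≠ L j) →
      T r ∈ colRestrict a b (leftShift a k L P) := by
    intro r hne
    refine Finset.mem_filter.mpr ⟨Finset.mem_union_left _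
      (Finset.mem_sdiff.mpr ⟨hQP _ (hTQ r), ?_⟩), hQa _ (hTQ r), hQb _ (hTQ r)⟩
    intro hmem
    obtain ⟨j, -, hj⟩ := Finset.mem_image.mp hmem
    exact hne j hj.symm
  -- adjacency of shifted L
  have hL''adjN : ∀ (r t : ℕ) (hr : r < k) (ht : t < k), t = r + 1 →
      (shiftLSeq a k L ⟨r, hr⟩).1 < (shiftLSeq a k L ⟨t, ht⟩).1 ∧
      (shiftLSeq a k L ⟨t, ht⟩).2 < (shiftLSeq a k L ⟨r, hr⟩).2 := by
    intro r t hr ht h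
    subst h
    constructor
    · show (if 0 < r then
          (L ⟨r - 1, Nat.lt_of_le_of_lt (Nat.sub_le _ _) hr⟩).1 else a) <
        (if 0 < r + 1 then
          (L ⟨r + 1 - 1, Nat.lt_of_le_of_lt (Nat.sub_le _ _) ht⟩).1 else a)
      rw [if_pos (Nat.succ_pos r)]
      by_cases h2 : 0 < r
      · rw [if_pos h2]
        exact (LltL (r - 1) (r + 1 - 1) (by omega) (by omega) (by omega)).1
      · rw [if_neg h2]
        exact lt_of_le_of_ne (hQa _ (hLQ _)) (Ne.symm (haE _ (hQP _ (hLQ _))))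
    · show (L ⟨r + 1, ht⟩).2 < (L ⟨r, hr⟩).2
      exact (LltL r (r + 1) hr ht (by omega)).2
  -- junction from shifted L into T at position i
  have hjuncIn : ∀ (e : ℕ) (he : e < k), e = i →
      (shiftLSeq a k L ⟨e, he⟩).1 < (T ⟨e, he⟩).1 ∧
      (T ⟨e, he⟩).2 < (shiftLSeq a k L ⟨e, he⟩).2 := by
    intro e he hei
    subst hei
    constructor
    · show (if 0 < e then
          (L ⟨e - 1, Nat.lt_of_le_of_lt (Nat.sub_le _ _) he⟩).1 else a) < (T ⟨e, he⟩).1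
      by_cases h : 0 < e
      · rw [if_pos h]
        have hTL := hpreN (e - 1) (by omega) (by omega)
        rw [← hTL]
        exact (TltT (e - 1) e (by omega) he (by omega)).1
      · rw [if_neg h]
        exact lt_of_le_of_ne (hQa _ (hTQ _)) (Ne.symm (haE _ (hQP _ (hTQ _))))
    · show (T ⟨e, he⟩).2 < (L ⟨e, he⟩).2
      exact hrow0
  -- main construction of a (k+1)-sequence in the shifted board
  have fireL : ∀ (w : ℕ) (hw : w < k), i ≤ w →
      (∀ hw1 : w + 1 < k,
        (T ⟨w, hw⟩).1 < (L ⟨w, hw⟩).1 ∧ (L ⟨w + 1, hw1⟩).2 < (T ⟨w, hw⟩).2) →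
      (∀ (r : ℕ) (hr : r < k), i ≤ r → r ≤ w → ∀ j : Fin k, T ⟨r, hr⟩ ≠ L j) →
      False := by
    intro w hw hiw hout hnin
    apply hE
    refine ⟨fun e => if h1 : e.1 ≤ i then shiftLSeq a k L ⟨e.1, by omega⟩
      else if h2 : e.1 ≤ w + 1 then T ⟨e.1 - 1, by omega⟩
      else shiftLSeq a k L ⟨e.1 - 1, by have := e.2; omega⟩, ?_⟩
    apply decseq_of_adj
    · intro e
      by_cases h1 : e.1 ≤ i
      · rw [dif_pos h1]; exact hL''Q _
      · rw [dif_neg h1]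
        by_cases h2 : e.1 ≤ w + 1
        · rw [dif_pos h2]; exact hT''Q _ (hnin (e.1 - 1) (by omega) (by omega) (by omega))
        · rw [dif_neg h2]; exact hL''Q _
    · intro e he
      dsimp only
      by_cases h1 : e + 1 ≤ i
      · rw [dif_pos (by omega : e ≤ i), dif_pos h1]
        exact hL''adjN e (e + 1) (by omega) (by omega) rfl
      · by_cases h2 : e ≤ i
        · rw [dif_pos h2, dif_neg h1, dif_pos (by omega : e + 1 ≤ w + 1)]
          have hei : e = i := by omega
          exact hjuncIn e (by omega) hei
        · by_cases h3 : e + 1 ≤ w + 1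
          · rw [dif_neg h2, dif_neg h1, dif_pos h3, dif_pos (by omega : e ≤ w + 1)]
            exact TltT (e - 1) (e + 1 - 1) (by omega) (by omega) (by omega)
          · by_cases h4 : e ≤ w + 1
            · rw [dif_neg h2, dif_pos h4, dif_neg h1, dif_neg h3]
              have hew : e = w + 1 := by omega
              subst hew
              have hw1 : w + 1 < k := by omega
              obtain ⟨o1, o2⟩ := hout hw1
              constructor
              · show (T ⟨w + 1 - 1, by omega⟩).1 <
                  (if 0 < (w + 1 + 1 - 1) then
                    (L ⟨w + 1 + 1 - 1 - 1, by omega⟩).1 else a)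
                rw [if_pos (by omega : 0 < w + 1 + 1 - 1)]
                exact o1
              · show (L ⟨w + 1, hw1⟩).2 < (T ⟨w + 1 - 1, by omega⟩).2
                exact o2
            · rw [dif_neg h2, dif_neg h4, dif_neg h1, dif_neg h3]
              exact hL''adjN (e - 1) (e + 1 - 1) (by omega) (by omega) (by omega)
  have hD0 : ∀ hr1 : i + 1 < k, (T ⟨i, hik⟩).2 < (L ⟨i + 1, hr1⟩).2 := by
    intro hr1
    rcases lt_trichotomy ((T ⟨i, hik⟩).2) ((L ⟨i + 1, hr1⟩).2) with h | h | h
    · exact h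
    · exact absurd (rowinj _ _ (hTQ ⟨i, hik⟩) (hLQ ⟨i + 1, hr1⟩) h) (hC0 ⟨i + 1, hr1⟩)
    · exact absurd (fireL i hik le_rfl (fun hw1 => ⟨hA0, h⟩)
        (fun r hr ha hb j => by
          have hri : r = i := by omega
          subst hri
          exact hC0 j)) id
  have main : ∀ (t r : ℕ), i ≤ r → r ≤ t → ∀ hr : r < k,
      ((T ⟨r, hr⟩).1 < (L ⟨r, hr⟩).1) ∧ ((T ⟨r, hr⟩).2 < (L ⟨r, hr⟩).2) ∧
        (∀ j : Fin k, T ⟨r, hr⟩ ≠ L j) ∧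
        (∀ hr1 : r + 1 < k, (T ⟨r, hr⟩).2 < (L ⟨r + 1, hr1⟩).2) := by
    intro t
    induction t with
    | zero =>
      intro r h1 h2 hr
      have hri : r = i := by omega
      subst hri
      exact ⟨hA0, hrow0, hC0, hD0⟩
    | succ t ih =>
      intro r h1 h2 hr
      rcases Nat.lt_or_ge r (t + 1) with hx | hx
      · exact ih r h1 (by omega) hr
      · have hrt : r = t + 1 := by omega
        subst hrt
        rcases Nat.lt_or_ge i (t + 1) with hit | hit
        · have ht : t < k := by omega
          obtain ⟨pA, pB, pC, pD⟩ := ih t (by omega) le_rfl ht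
          have hB : (T ⟨t + 1, hr⟩).2 < (L ⟨t + 1, hr⟩).2 :=
            lt_trans (TltT t (t + 1) ht hr (by omega)).2 (pD hr)
          have hA : (T ⟨t + 1, hr⟩).1 < (L ⟨t + 1, hr⟩).1 := by
            rcases lt_trichotomy ((T ⟨t + 1, hr⟩).1) ((L ⟨t + 1, hr⟩).1) with h | h | h
            · exact h
            · have heq := colinj _ _ (hTQ ⟨t + 1, hr⟩) (hLQ ⟨t + 1, hr⟩) h
              have h2' := congrArg Prod.snd heq
              omega
            · exact absurd (qglue L T hLdec hTdec ⟨t + 1, hr⟩ h hB) id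
          have hC : ∀ j : Fin k, T ⟨t + 1, hr⟩ ≠ L j := by
            intro j hEq
            rcases lt_trichotomy j.1 (t + 1) with h | h | h
            · have h1' := (hLmono j ⟨t + 1, hr⟩ h).2
              have h2' := congrArg Prod.snd hEq
              omega
            · have hj : j = ⟨t + 1, hr⟩ := Fin.ext h
              rw [hj] at hEq
              have h2' := congrArg Prod.snd hEq
              omega
            · have h1' := (hLmono ⟨t + 1, hr⟩ j h).1
              have h2' := congrArg Prod.fst hEq
              omega
          refine ⟨hA, hB, hC, ?_⟩
          intro hr1
          rcases lt_trichotomy ((T ⟨t + 1, hr⟩).2) ((L ⟨t + 2, hr1⟩).2) with h | h | h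
          · exact h
          · exact absurd (rowinj _ _ (hTQ ⟨t + 1, hr⟩) (hLQ ⟨t + 2, hr1⟩) h) (hC ⟨t + 2, hr1⟩)
          · exact absurd (fireL (t + 1) hr (by omega) (fun hw1 => ⟨hA, h⟩)
              (fun r' hr' ha hb j => by
                rcases Nat.lt_or_ge r' (t + 1) with hy | hy
                · exact (ih r' ha (by omega) hr').2.2.1 j
                · have hr'' : r' = t + 1 := by omega
                  subst hr''
                  exact hC j)) id
        · have hti : i = t + 1 := by omega
          subst hti
          exact ⟨hA0, hrow0, hC0, hD0⟩
  exact fireL (k - 1) (by omega) (by omega)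
    (fun hw1 => absurd hw1 (by omega))
    (fun r hr ha hb j => (main r r ha le_rfl hr).2.2.1 j)

/-- **Lemma.** Let `L` be a longest decreasing sequence, of length `k`, in `P|_{a,b}`.
If column `b` contains no cell of `P` and `L ≠ D_{a,b}(P)`, then `P(L → b)|_{a,b}`
contains a decreasing sequence of length `k + 1`; if column `a` contains no cell of `P`
and `L ≠ d_{a,b}(P)`, then `P(a ← L)|_{a,b}` contains a decreasing sequence of length
`k + 1`. -/
theorem shift_nonextremal (m n : ℕ) (P : Finset Cell) (hP : IsPlacement (Rect m n) P)
    (a b : ℕ) (ha1 : 1 ≤ a) (hab : a < b) (hbm : b ≤ m)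
    (k : ℕ) (L : Fin k → Cell) (hL : IsMaxDec a b P k L) :
    (((∀ p ∈ P, p.1 ≠ b) ∧ ∀ D : Fin k → Cell, IsLargestDec a b P k D → L ≠ D) →
      ∃ E : Fin (k + 1) → Cell,
        IsDecSeq (colRestrict a b (rightShift b k L P)) (k + 1) E) ∧
    (((∀ p ∈ P, p.1 ≠ a) ∧ ∀ d : Fin k → Cell, IsSmallestDec a b P k d → L ≠ d) →
      ∃ E : Fin (k + 1) → Cell,
        IsDecSeq (colRestrict a b (leftShift a k L P)) (k + 1) E) := by
  have hrowinjQ : ∀ (T : Fin k → Cell), IsDecSeq (colRestrict a b P) k T →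
      ∀ j : Fin k, (T j).2 = (L j).2 → T j = L j := by
    intro T hT j h
    exact hP.2.2 (T j) ((Finset.mem_filter.mp (hT.1 j)).1) (L j)
      ((Finset.mem_filter.mp (hL.1.1 j)).1) h
  constructor
  · rintro ⟨hbE, hneq⟩
    by_cases hcex : ∃ (i₀ : Fin k) (T : Fin k → Cell),
        IsDecSeq (colRestrict a b P) k T ∧ (∀ j : Fin k, j < i₀ → T j = L j) ∧
          (L i₀).2 < (T i₀).2
    · obtain ⟨i₀, T, h1, h2, h3⟩ := hcex
      exact shiftR_main hP hab hL hbE i₀ T h1 h2 h3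
    · exfalso
      refine hneq L ⟨hL, ?_⟩ rfl
      intro T hT
      by_cases hall : ∀ j2 : Fin k, (T j2).2 = (L j2).2
      · exact Or.inl hall
      · push_neg at hall
        obtain ⟨j1, hj1⟩ := hall
        have hSne : (Finset.univ.filter (fun j : Fin k => (T j).2 ≠ (L j).2)).Nonempty :=
          ⟨j1, Finset.mem_filter.mpr ⟨Finset.mem_univ _, hj1⟩⟩
        obtain ⟨j₀, hj₀, hprev⟩ : ∃ j₀ : Fin k, (T j₀).2 ≠ (L j₀).2 ∧
            ∀ j : Fin k, j < j₀ → (T j).2 = (L j).2 := by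
          refine ⟨Finset.min' _ hSne,
            (Finset.mem_filter.mp (Finset.min'_mem _ hSne)).2, ?_⟩
          intro j hj
          by_contra hne
          exact absurd hj (not_lt.mpr (Finset.min'_le _ j
            (Finset.mem_filter.mpr ⟨Finset.mem_univ _, hne⟩)))
        rcases lt_or_gt_of_ne hj₀ with h | h
        · exact Or.inr ⟨j₀, h, hprev⟩
        · exact absurd ⟨j₀, T, hT,
            fun j hj => hrowinjQ T hT j (hprev j hj), h⟩ hcex
  · rintro ⟨haE, hneq⟩
    by_cases hcex : ∃ (i₀ : Fin k) (T : Fin k → Cell),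
        IsDecSeq (colRestrict a b P) k T ∧ (∀ j : Fin k, j < i₀ → T j = L j) ∧
          (T i₀).2 < (L i₀).2
    · obtain ⟨i₀, T, h1, h2, h3⟩ := hcex
      exact shiftL_main hP hab hL haE i₀ T h1 h2 h3
    · exfalso
      refine hneq L ⟨hL, ?_⟩ rfl
      intro T hT
      by_cases hall : ∀ j2 : Fin k, (T j2).2 = (L j2).2
      · exact Or.inl (fun j2 => (hall j2).symm)
      · push_neg at hall
        obtain ⟨j1, hj1⟩ := hall
        have hSne : (Finset.univ.filter (fun j : Fin k => (T j).2 ≠ (L j).2)).Nonempty :=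
          ⟨j1, Finset.mem_filter.mpr ⟨Finset.mem_univ _, hj1⟩⟩
        obtain ⟨j₀, hj₀, hprev⟩ : ∃ j₀ : Fin k, (T j₀).2 ≠ (L j₀).2 ∧
            ∀ j : Fin k, j < j₀ → (T j).2 = (L j).2 := by
          refine ⟨Finset.min' _ hSne,
            (Finset.mem_filter.mp (Finset.min'_mem _ hSne)).2, ?_⟩
          intro j hj
          by_contra hne
          exact absurd hj (not_lt.mpr (Finset.min'_le _ j
            (Finset.mem_filter.mpr ⟨Finset.mem_univ _, hne⟩)))
        rcases lt_or_gt_of_ne hj₀ with h | h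
        · exact absurd ⟨j₀, T, hT,
            fun j hj => hrowinjQ T hT j (hprev j hj), h⟩ hcex
        · exact Or.inr ⟨j₀, h, fun j hj => (hprev j hj).symm⟩
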